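/- For n ≥ 2, the Sobolev-Jacobi polynomial P̃_n^{(−1,−1)}(x) = C(2n−2,n)^{−1} ∑_{k=1}^{n−1} C(n−1,k) C(n−1,n−k) (x−1)^{n−k}(x+1)^k is an eigenfunction of the Jacobi differential operator with α = β = −1: (1−x²) P̃_n'' + 0·P̃_n' = −n(n−1) P̃_n, i.e. (1−x²)·(d²/dx²)P̃_n^{(−1,−1)}(x) = −n(n−1)·P̃_n^{(−1,−1)}(x) as an identity of polynomials. -/
import Mathlib

open Polynomial Finset

/-- The Sobolev-Jacobi polynomial `P̃_n^{(−1,−1)}` for `n ≥ 2`. -/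
noncomputable def sobolevJacobi (n : ℕ) : Polynomial ℝ :=
  Polynomial.C (((2 * n - 2).choose n : ℝ))⁻¹ *
    ∑ k ∈ Finset.Icc 1 (n - 1),
      Polynomial.C (((n - 1).choose k : ℝ) * ((n - 1).choose (n - k) : ℝ)) *
        (Polynomial.X - 1) ^ (n - k) * (Polynomial.X + 1) ^ k

namespace SJaux

noncomputable def sjD (n k : ℕ) : ℝ :=
  ((n - 1).choose k : ℝ) * ((n - 1).choose (n - k) : ℝ)

noncomputable def sjF (n k : ℕ) : Polynomial ℝ := (X - 1) ^ (n - k) * (X + 1) ^ k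

noncomputable def sjA (n k : ℕ) : Polynomial ℝ :=
  C (-((k : ℝ) * ((k : ℝ) - 1)) * sjD n k) * sjF n k

noncomputable def sjB (n k : ℕ) : Polynomial ℝ :=
  C (-(2 * (k : ℝ) * ((n : ℝ) - (k : ℝ))) * sjD n k) * sjF n k

noncomputable def sjE (n k : ℕ) : Polynomial ℝ :=
  C (-(((n : ℝ) - (k : ℝ)) * (((n : ℝ) - (k : ℝ)) - 1)) * sjD n k) * sjF n k

lemma R1 (n k : ℕ) (hk : k ≤ n) :
    ((n : ℝ) - k) * (((n : ℝ) - k) - 1) * sjD n k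
      = ((k : ℝ) + 1) * (k : ℝ) * sjD n (k + 1) := by
  rcases (by omega : k + 2 ≤ n ∨ k + 1 = n ∨ k = n) with h | h | h
  · obtain ⟨m, rfl⟩ : ∃ m, n = k + m + 2 := ⟨n - k - 2, by omega⟩
    have h1 := Nat.choose_succ_right_eq (k + m + 1) k
    have h2 := Nat.choose_succ_right_eq (k + m + 1) (m + 1)
    rw [show k + m + 1 - k = m + 1 from by omega] at h1
    rw [show k + m + 1 - (m + 1) = k from by omega] at h2
    simp only [sjD, show k + m + 2 - 1 = k + m + 1 from by omega,
      show k + m + 2 - k = m + 2 from by omega,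
      show k + m + 2 - (k + 1) = m + 1 from by omega]
    have h1' : ((k + m + 1).choose (k + 1) : ℝ) * ((k : ℝ) + 1)
        = ((k + m + 1).choose k : ℝ) * ((m : ℝ) + 1) := by exact_mod_cast congrArg (Nat.cast (R := ℝ)) h1
    have h2' : ((k + m + 1).choose (m + 2) : ℝ) * ((m : ℝ) + 2)
        = ((k + m + 1).choose (m + 1) : ℝ) * (k : ℝ) := by exact_mod_cast congrArg (Nat.cast (R := ℝ)) h2
    push_cast
    linear_combination (-(k : ℝ) * ((k + m + 1).choose (m + 1) : ℝ)) * h1'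
      + (((m : ℝ) + 1) * ((k + m + 1).choose k : ℝ)) * h2'
  · obtain rfl : n = k + 1 := h.symm
    have hd : sjD (k + 1) (k + 1) = 0 := by
      simp [sjD, Nat.choose_eq_zero_of_lt (show k + 1 - 1 < k + 1 from by omega)]
    rw [hd]
    push_cast
    ring
  · subst h
    have hd : sjD k (k + 1) = 0 := by
      simp [sjD, Nat.choose_eq_zero_of_lt (show k - 1 < k + 1 from by omega)]
    rw [hd]
    ring

lemma sjD_zero (n : ℕ) (hn : 2 ≤ n) : sjD n 0 = 0 := by
  simp [sjD, Nat.choose_eq_zero_of_lt (show n - 1 < n from by omega)]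

lemma sjD_top (n : ℕ) (hn : 2 ≤ n) : sjD n n = 0 := by
  simp [sjD, Nat.choose_eq_zero_of_lt (show n - 1 < n from by omega)]

lemma sjD_succ_top (n : ℕ) : sjD n (n + 1) = 0 := by
  simp [sjD, Nat.choose_eq_zero_of_lt (show n - 1 < n + 1 from by omega)]

lemma sjA_zero (n : ℕ) : sjA n 0 = 0 := by simp [sjA]

lemma sjA_succ_top (n : ℕ) : sjA n (n + 1) = 0 := by simp [sjA, sjD_succ_top]

lemma sjE_zero (n : ℕ) (hn : 2 ≤ n) : sjE n 0 = 0 := by simp [sjE, sjD_zero n hn]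

lemma sjE_top (n : ℕ) : sjE n n = 0 := by
  have : ((n : ℝ) - (n : ℝ)) = 0 := by ring
  simp [sjE, this]

lemma d2f (n k : ℕ) :
    derivative (derivative (sjF n k)) =
      C ((n - k : ℕ) : ℝ) * C ((n - k - 1 : ℕ) : ℝ)
          * ((X - 1 : ℝ[X]) ^ (n - k - 1 - 1) * (X + 1) ^ k)
        + 2 * (C ((n - k : ℕ) : ℝ) * C (k : ℝ))
          * ((X - 1 : ℝ[X]) ^ (n - k - 1) * (X + 1) ^ (k - 1))
        + C (k : ℝ) * C ((k - 1 : ℕ) : ℝ)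
          * ((X - 1 : ℝ[X]) ^ (n - k) * (X + 1) ^ (k - 1 - 1)) := by
  simp only [sjF, derivative_mul, derivative_pow, derivative_sub, derivative_add,
    derivative_X, derivative_one, derivative_C, sub_zero, add_zero, zero_mul, mul_zero,
    zero_add, mul_one]
  ring

lemma piece1 (m k : ℕ) :
    (1 - X ^ 2 : ℝ[X]) * (C (sjD (k + m) k)
        * (C ((m : ℕ) : ℝ) * C ((m - 1 : ℕ) : ℝ)
          * ((X - 1 : ℝ[X]) ^ (m - 1 - 1) * (X + 1) ^ k)))
      = sjA (k + m) (k + 1) := by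
  have hA : sjA (k + m) (k + 1)
      = C (-(((m : ℝ)) * ((m : ℝ) - 1)) * sjD (k + m) k)
          * ((X - 1 : ℝ[X]) ^ (m - 1) * (X + 1) ^ (k + 1)) := by
    simp only [sjA, sjF, show k + m - (k + 1) = m - 1 from by omega]
    congr 1
    congr 1
    have h := R1 (k + m) k (by omega)
    push_cast at h ⊢
    linear_combination h
  rw [hA]
  match m with
  | 0 => simp
  | 1 => norm_num
  | (m + 2) =>
    rw [show m + 2 - 1 - 1 = m from by omega, show m + 2 - 1 = m + 1 from by omega]
    rw [show (1 - X ^ 2 : ℝ[X]) = -((X - 1) * (X + 1)) from by ring]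
    simp only [map_mul, map_neg, map_sub, map_add, map_one, C_eq_natCast]
    push_cast
    ring

lemma piece2 (m k : ℕ) :
    (1 - X ^ 2 : ℝ[X]) * (C (sjD (k + m) k)
        * (2 * (C ((m : ℕ) : ℝ) * C (k : ℝ))
          * ((X - 1 : ℝ[X]) ^ (m - 1) * (X + 1) ^ (k - 1))))
      = sjB (k + m) k := by
  simp only [sjB, sjF, show k + m - k = m from by omega]
  match m, k with
  | 0, k =>
    push_cast
    simp
  | m + 1, 0 =>
    push_cast
    simp
  | m + 1, k + 1 =>
    rw [show m + 1 - 1 = m from by omega, show k + 1 - 1 = k from by omega]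
    rw [show (1 - X ^ 2 : ℝ[X]) = -((X - 1) * (X + 1)) from by ring]
    simp only [map_mul, map_neg, map_sub, map_add, map_one, C_eq_natCast, map_ofNat]
    push_cast
    ring

lemma piece3 (m k : ℕ) (hn : 2 ≤ k + m) :
    (1 - X ^ 2 : ℝ[X]) * (C (sjD (k + m) k)
        * (C (k : ℝ) * C ((k - 1 : ℕ) : ℝ)
          * ((X - 1 : ℝ[X]) ^ m * (X + 1) ^ (k - 1 - 1))))
      = sjE (k + m) (k - 1) := by
  match k with
  | 0 =>
    simp [sjE, sjD_zero m (show 2 ≤ m from by omega)]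
  | (j + 1) =>
    rw [show j + 1 - 1 = j from rfl]
    have hE : sjE (j + 1 + m) j
        = C (-(((j : ℝ) + 1) * (((j : ℝ) + 1) - 1)) * sjD (j + 1 + m) (j + 1))
            * ((X - 1 : ℝ[X]) ^ (m + 1) * (X + 1) ^ j) := by
      simp only [sjE, sjF, show j + 1 + m - j = m + 1 from by omega]
      congr 1
      congr 1
      have h := R1 (j + 1 + m) j (by omega)
      push_cast at h ⊢
      linear_combination -h
    rw [hE]
    match j with
    | 0 => simp
    | j + 1 =>
      rw [show (1 - X ^ 2 : ℝ[X]) = -((X - 1) * (X + 1)) from by ring]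
      simp only [map_mul, map_neg, map_sub, map_add, map_one, C_eq_natCast]
      push_cast
      ring

lemma term_eq (n k : ℕ) (hn : 2 ≤ n) (hk : k ≤ n) :
    (1 - X ^ 2 : ℝ[X]) * (C (sjD n k) * derivative (derivative (sjF n k)))
      = sjA n (k + 1) + sjB n k + sjE n (k - 1) := by
  obtain ⟨m, rfl⟩ : ∃ m, n = k + m := ⟨n - k, by omega⟩
  rw [d2f]
  rw [Nat.add_sub_cancel_left]
  calc (1 - X ^ 2 : ℝ[X]) * (C (sjD (k + m) k)
        * (C ((m : ℕ) : ℝ) * C ((m - 1 : ℕ) : ℝ)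
            * ((X - 1 : ℝ[X]) ^ (m - 1 - 1) * (X + 1) ^ k)
          + 2 * (C ((m : ℕ) : ℝ) * C (k : ℝ))
            * ((X - 1 : ℝ[X]) ^ (m - 1) * (X + 1) ^ (k - 1))
          + C (k : ℝ) * C ((k - 1 : ℕ) : ℝ)
            * ((X - 1 : ℝ[X]) ^ m * (X + 1) ^ (k - 1 - 1))))
      = (1 - X ^ 2 : ℝ[X]) * (C (sjD (k + m) k)
            * (C ((m : ℕ) : ℝ) * C ((m - 1 : ℕ) : ℝ)
              * ((X - 1 : ℝ[X]) ^ (m - 1 - 1) * (X + 1) ^ k)))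
        + (1 - X ^ 2 : ℝ[X]) * (C (sjD (k + m) k)
            * (2 * (C ((m : ℕ) : ℝ) * C (k : ℝ))
              * ((X - 1 : ℝ[X]) ^ (m - 1) * (X + 1) ^ (k - 1))))
        + (1 - X ^ 2 : ℝ[X]) * (C (sjD (k + m) k)
            * (C (k : ℝ) * C ((k - 1 : ℕ) : ℝ)
              * ((X - 1 : ℝ[X]) ^ m * (X + 1) ^ (k - 1 - 1)))) := by ring
    _ = sjA (k + m) (k + 1) + sjB (k + m) k + sjE (k + m) (k - 1) := by
        rw [piece1, piece2, piece3 m k hn]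

lemma main (n : ℕ) (hn : 2 ≤ n) :
    (1 - X ^ 2 : ℝ[X])
        * derivative (derivative (∑ k ∈ range (n + 1), C (sjD n k) * sjF n k))
      = C (-(n : ℝ) * ((n : ℝ) - 1)) * ∑ k ∈ range (n + 1), C (sjD n k) * sjF n k := by
  rw [derivative_sum]
  simp only [derivative_C_mul]
  rw [derivative_sum]
  simp only [derivative_C_mul]
  rw [Finset.mul_sum]
  rw [Finset.sum_congr rfl (fun k hk => term_eq n k hn (by simp at hk; omega))]
  rw [Finset.sum_add_distrib, Finset.sum_add_distrib]
  have hA : ∑ k ∈ range (n + 1), sjA n (k + 1) = ∑ k ∈ range (n + 1), sjA n k := by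
    have h1 : ∑ k ∈ range (n + 1 + 1), sjA n k
        = (∑ k ∈ range (n + 1), sjA n (k + 1)) + sjA n 0 := Finset.sum_range_succ' _ _
    have h2 : ∑ k ∈ range (n + 1 + 1), sjA n k
        = (∑ k ∈ range (n + 1), sjA n k) + sjA n (n + 1) := Finset.sum_range_succ _ _
    rw [sjA_zero, add_zero] at h1
    rw [sjA_succ_top, add_zero] at h2
    rw [← h1, h2]
  have hE : ∑ k ∈ range (n + 1), sjE n (k - 1) = ∑ k ∈ range (n + 1), sjE n k := by
    have h1 : ∑ k ∈ range (n + 1), sjE n (k - 1)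
        = (∑ k ∈ range n, sjE n (k + 1 - 1)) + sjE n (0 - 1) := Finset.sum_range_succ' _ _
    have h2 : ∑ k ∈ range (n + 1), sjE n k
        = (∑ k ∈ range n, sjE n k) + sjE n n := Finset.sum_range_succ _ _
    simp only [Nat.add_sub_cancel, Nat.zero_sub] at h1
    rw [sjE_zero n hn, add_zero] at h1
    rw [sjE_top, add_zero] at h2
    rw [h1, h2]
  rw [hA, hE, ← Finset.sum_add_distrib, ← Finset.sum_add_distrib, Finset.mul_sum]
  refine Finset.sum_congr rfl (fun k hk => ?_)
  simp only [sjA, sjB, sjE]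
  rw [← add_mul, ← add_mul, ← C_add, ← C_add, ← mul_assoc, ← C_mul]
  congr 1
  ring

lemma sj_eq (n : ℕ) (hn : 2 ≤ n) :
    sobolevJacobi n
      = C (((2 * n - 2).choose n : ℝ))⁻¹ * ∑ k ∈ range (n + 1), C (sjD n k) * sjF n k := by
  unfold sobolevJacobi
  congr 1
  rw [← Finset.sum_subset (show Finset.Icc 1 (n - 1) ⊆ range (n + 1) from by
      intro k hk; simp only [Finset.mem_Icc] at hk; simp only [Finset.mem_range]; omega)
    (fun k hk hk2 => by
      simp only [Finset.mem_range] at hk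
      simp only [Finset.mem_Icc, not_and, not_le] at hk2
      have : k = 0 ∨ k = n := by omega
      rcases this with rfl | rfl
      · rw [sjD_zero _ hn]; simp
      · rw [sjD_top _ hn]; simp)]
  refine Finset.sum_congr rfl (fun k hk => ?_)
  simp only [sjD, sjF]
  ring

end SJaux

open SJaux in
/-- For `n ≥ 2`, the Sobolev-Jacobi polynomial `P̃_n^{(−1,−1)}` is an eigenfunction
of the Jacobi differential operator with `α = β = −1`:
`(1 − x²) P̃_n'' = −n(n−1) P̃_n` as an identity of polynomials. -/
theorem sobolevJacobi_eigenfunction (n : ℕ) (hn : 2 ≤ n) :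
    (1 - Polynomial.X ^ 2) *
        Polynomial.derivative (Polynomial.derivative (sobolevJacobi n)) =
      Polynomial.C (-(n : ℝ) * ((n : ℝ) - 1)) * (sobolevJacobi n) := by
  rw [sj_eq n hn, derivative_C_mul, derivative_C_mul]
  have h := main n hn
  linear_combination (C (((2 * n - 2).choose n : ℝ))⁻¹ : ℝ[X]) * h
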